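/- arXiv:1403.5540 — 2 statements merged into one kernel-verified Lean document; each statement's English description precedes it below -/
import Mathlib

section
/- Assume P ≠ ∅. Then: (1) for every x ∈ P there exists a minimal point y of P with y ≤ x; (2) every minimal point of P is a convex combination of extreme points of P; (3) there exists a constant M, depending only on C_1,…,C_n (and not on b), such that for every b ∈ ℝ^m with P ≠ ∅, every minimal point y of P satisfies ‖y‖_1 ≤ M ‖b‖_1, where ‖·‖_1 is the ℓ¹ norm. -/
noncomputable section

/-- The polyhedron `P = {x ∈ ℝ₊^n : Σ_i x_i C_i = b}`. -/
def PolyP {m n : ℕ} (C : Fin n → Fin m → ℝ) (b : Fin m → ℝ) : Set (Fin n → ℝ) :=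
  {x | (∀ i, 0 ≤ x i) ∧ ∑ i, x i • C i = b}

/-- `x` is a *minimal* point of `P` if `x ∈ P` and no `y ∈ P` satisfies `y < x`
(coordinatewise order). -/
def IsMinimalPt {m n : ℕ} (C : Fin n → Fin m → ℝ) (b : Fin m → ℝ) (x : Fin n → ℝ) : Prop :=
  x ∈ PolyP C b ∧ ¬ ∃ y ∈ PolyP C b, y ≤ x ∧ y ≠ x

namespace Stmt18Aux

open Finset

variable {m n : ℕ}

/-- The columns of `C` indexed by `s` are linearly independent (elementary form). -/
def Good (C : Fin n → Fin m → ℝ) (s : Finset (Fin n)) : Prop :=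
  ∀ g : Fin n → ℝ, (∀ i ∉ s, g i = 0) → ∑ i, g i • C i = 0 → g = 0

/-- Support of a vector, as a finset. -/
def supp (y : Fin n → ℝ) : Finset (Fin n) := univ.filter (fun i => y i ≠ 0)

lemma mem_supp {y : Fin n → ℝ} {i : Fin n} : i ∈ supp y ↔ y i ≠ 0 := by
  simp [supp]

lemma not_mem_supp {y : Fin n → ℝ} {i : Fin n} : i ∉ supp y ↔ y i = 0 := by
  simp [supp]

lemma sum_sub_smul (C : Fin n → Fin m → ℝ) (x y : Fin n → ℝ) :
    ∑ i, (x i - y i) • C i = (∑ i, x i • C i) - ∑ i, y i • C i := by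
  rw [← Finset.sum_sub_distrib]
  exact Finset.sum_congr rfl fun i _ => by rw [sub_smul]

lemma sum_add_mul_smul (C : Fin n → Fin m → ℝ) (c : ℝ) (y g : Fin n → ℝ) :
    ∑ i, (y i + c * g i) • C i = (∑ i, y i • C i) + c • ∑ i, g i • C i := by
  rw [Finset.smul_sum, ← Finset.sum_add_distrib]
  exact Finset.sum_congr rfl fun i _ => by rw [add_smul, smul_smul]

lemma sum_comb_smul (C : Fin n → Fin m → ℝ) (a c : ℝ) (u v : Fin n → ℝ) :
    ∑ i, (a • u + c • v) i • C i = a • (∑ i, u i • C i) + c • ∑ i, v i • C i := by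
  rw [Finset.smul_sum, Finset.smul_sum, ← Finset.sum_add_distrib]
  refine Finset.sum_congr rfl fun i _ => ?_
  simp only [Pi.add_apply, Pi.smul_apply, smul_eq_mul]
  rw [add_smul, smul_smul, smul_smul]

/-- Part 1: below every point of `P` there is a minimal point. -/
lemma part1 (C : Fin n → Fin m → ℝ) (b : Fin m → ℝ) :
    ∀ x ∈ PolyP C b, ∃ y, IsMinimalPt C b y ∧ y ≤ x := by
  intro x hx
  have hx0 : (0 : Fin n → ℝ) ≤ x := fun i => hx.1 i
  set K : Set (Fin n → ℝ) := PolyP C b ∩ Set.Icc 0 x with hK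
  have hxK : x ∈ K := ⟨hx, hx0, le_refl x⟩
  have hclosedP : IsClosed (PolyP C b) := by
    have h1 : IsClosed {z : Fin n → ℝ | ∀ i, 0 ≤ z i} := by
      have he : {z : Fin n → ℝ | ∀ i, 0 ≤ z i} = ⋂ i, {z | 0 ≤ z i} := by
        ext z; simp
      rw [he]
      exact isClosed_iInter fun i => isClosed_le continuous_const (continuous_apply i)
    have h2 : IsClosed {z : Fin n → ℝ | ∑ i, z i • C i = b} := by
      have hc : Continuous fun z : Fin n → ℝ => ∑ i, z i • C i :=
        continuous_finset_sum _ fun i _ => (continuous_apply i).smul continuous_const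
      exact isClosed_eq hc continuous_const
    exact h1.inter h2
  have hKcomp : IsCompact K :=
    isCompact_Icc.of_isClosed_subset (hclosedP.inter isClosed_Icc) Set.inter_subset_right
  have hcont : ContinuousOn (fun z : Fin n → ℝ => ∑ i, z i) K :=
    (continuous_finset_sum _ fun i _ => continuous_apply i).continuousOn
  obtain ⟨y, hyK, hymin⟩ := hKcomp.exists_isMinOn ⟨x, hxK⟩ hcont
  refine ⟨y, ⟨hyK.1, ?_⟩, hyK.2.2⟩
  rintro ⟨z, hz, hzy, hne⟩
  have hzK : z ∈ K := ⟨hz, fun i => hz.1 i, le_trans hzy hyK.2.2⟩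
  have h1 : ∑ i, y i ≤ ∑ i, z i := hymin hzK
  have h2 : ∀ i, z i = y i := by
    intro i
    by_contra hne2
    have hlt : z i < y i := lt_of_le_of_ne (hzy i) hne2
    have : ∑ j, z j < ∑ j, y j :=
      Finset.sum_lt_sum (fun j _ => hzy j) ⟨i, mem_univ i, hlt⟩
    linarith
  exact hne (funext h2)

/-- Independence of the support columns implies extremality. -/
lemma extreme_of_good (C : Fin n → Fin m → ℝ) (b : Fin m → ℝ) (y : Fin n → ℝ)
    (hy : y ∈ PolyP C b) (hg : Good C (supp y)) :
    y ∈ Set.extremePoints ℝ (PolyP C b) := by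
  refine ⟨hy, ?_⟩
  intro x₁ hx₁ x₂ hx₂ hseg
  obtain ⟨a, c, ha, hc, hac, hsum⟩ := hseg
  have hz : ∀ i, y i = 0 → x₁ i = 0 ∧ x₂ i = 0 := by
    intro i hi
    have h1 : a * x₁ i + c * x₂ i = 0 := by
      have := congrFun hsum i
      simpa [hi] using this
    have h2 := hx₁.1 i
    have h3 := hx₂.1 i
    constructor <;> nlinarith
  have key : ∀ x, x ∈ PolyP C b → (∀ i, y i = 0 → x i = 0) → x = y := by
    intro x hxP hxz
    have hsub : x - y = 0 := by
      apply hg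
      · intro i hi
        have hyi : y i = 0 := not_mem_supp.mp hi
        simp [hxz i hyi, hyi]
      · simp only [Pi.sub_apply]
        rw [sum_sub_smul, hxP.2, hy.2, sub_self]
    have := sub_eq_zero.mp hsub
    exact this
  exact key x₁ hx₁ (fun i hi => (hz i hi).1)

/-- Extremality implies independence of the support columns. -/
lemma good_of_extreme (C : Fin n → Fin m → ℝ) (b : Fin m → ℝ) (y : Fin n → ℝ)
    (hy : y ∈ Set.extremePoints ℝ (PolyP C b)) : Good C (supp y) := by
  by_contra hng
  unfold Good at hng
  push_neg at hng
  obtain ⟨g, hg1, hg2, hg3⟩ := hng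
  have hyP := hy.1
  set t : Finset (Fin n) := univ.filter (fun i => g i ≠ 0) with ht
  have htne : t.Nonempty := by
    obtain ⟨i, hi⟩ := Function.ne_iff.mp hg3
    have hi' : g i ≠ 0 := by simpa using hi
    exact ⟨i, by simp [ht, hi']⟩
  have hypos : ∀ i, g i ≠ 0 → 0 < y i := by
    intro i hi
    rcases lt_or_eq_of_le (hyP.1 i) with h | h
    · exact h
    · exact absurd (hg1 i (not_mem_supp.mpr h.symm)) hi
  set ε : ℝ := t.inf' htne (fun i => y i / |g i|) with hε
  have hεpos : 0 < ε := by
    rw [hε, Finset.lt_inf'_iff]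
    intro i hit
    have hgi : g i ≠ 0 := by simpa [ht] using hit
    exact div_pos (hypos i hgi) (abs_pos.mpr hgi)
  have hbound : ∀ i, ε * |g i| ≤ y i := by
    intro i
    by_cases h : g i = 0
    · simpa [h] using hyP.1 i
    · have hit : i ∈ t := by simp [ht, h]
      have hle : ε ≤ y i / |g i| := Finset.inf'_le _ hit
      have habs : 0 < |g i| := abs_pos.mpr h
      calc ε * |g i| ≤ (y i / |g i|) * |g i| :=
            mul_le_mul_of_nonneg_right hle habs.le
        _ = y i := div_mul_cancel₀ _ habs.ne'
  set u : Fin n → ℝ := fun i => y i - ε * g i with hu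
  set v : Fin n → ℝ := fun i => y i + ε * g i with hv
  have huP : u ∈ PolyP C b := by
    constructor
    · intro i
      have h1 : ε * g i ≤ ε * |g i| := mul_le_mul_of_nonneg_left (le_abs_self _) hεpos.le
      have := hbound i
      simp only [hu]
      linarith
    · have : ∀ i, u i • C i = (y i + (-ε) * g i) • C i := by
        intro i; simp [hu]; ring_nf
      rw [Finset.sum_congr rfl fun i _ => this i, sum_add_mul_smul, hg2, hyP.2]
      simp
  have hvP : v ∈ PolyP C b := by
    constructor
    · intro i
      have h1 : -(ε * |g i|) ≤ ε * g i := by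
        have := mul_le_mul_of_nonneg_left (neg_abs_le (g i)) hεpos.le
        linarith
      have := hbound i
      simp only [hv]
      linarith
    · rw [hv]
      rw [show ∑ i, (y i + ε * g i) • C i = (∑ i, y i • C i) + ε • ∑ i, g i • C i from
        sum_add_mul_smul C ε y g, hg2, hyP.2]
      simp
  have hyseg : y ∈ openSegment ℝ u v := by
    refine ⟨1/2, 1/2, by norm_num, by norm_num, by norm_num, ?_⟩
    funext i
    simp only [Pi.add_apply, Pi.smul_apply, smul_eq_mul, hu, hv]
    ring
  obtain ⟨i₀, hi₀⟩ := htne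
  have hgi₀ : g i₀ ≠ 0 := by simpa [ht] using hi₀
  have := hy.2 huP hvP hyseg
  have : u i₀ = y i₀ := by rw [this]
  have heg : ε * g i₀ = 0 := by simp only [hu] at this; linarith
  rcases mul_eq_zero.mp heg with h | h
  · exact absurd h hεpos.ne'
  · exact absurd h hgi₀

/-- A convex decomposition of a minimal point consists of minimal points. -/
lemma minimal_of_decomp (C : Fin n → Fin m → ℝ) (b : Fin m → ℝ) {y u v : Fin n → ℝ} {a c : ℝ}
    (hy : IsMinimalPt C b y) (hu : u ∈ PolyP C b) (hv : v ∈ PolyP C b)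
    (ha : 0 < a) (hc : 0 ≤ c) (hac : a + c = 1) (hdec : a • u + c • v = y) :
    IsMinimalPt C b u := by
  refine ⟨hu, ?_⟩
  rintro ⟨u', hu', hle, hne⟩
  apply hy.2
  refine ⟨a • u' + c • v, ⟨?_, ?_⟩, ?_, ?_⟩
  · intro i
    have := hu'.1 i
    have := hv.1 i
    simp only [Pi.add_apply, Pi.smul_apply, smul_eq_mul]
    nlinarith
  · rw [sum_comb_smul, hu'.2, hv.2, ← add_smul, hac, one_smul]
  · intro i
    rw [← hdec]
    simp only [Pi.add_apply, Pi.smul_apply, smul_eq_mul]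
    nlinarith [hle i]
  · intro heq
    apply hne
    rw [← hdec] at heq
    have h2 : a • u' = a • u := add_right_cancel heq
    exact smul_right_injective _ ha.ne' h2

/-- A minimal point has no nonzero nonnegative kernel direction on its support. -/
lemma no_nonneg_dir (C : Fin n → Fin m → ℝ) (b : Fin m → ℝ) {y : Fin n → ℝ}
    (hy : IsMinimalPt C b y) {g : Fin n → ℝ} (hg1 : ∀ i ∉ supp y, g i = 0)
    (hg2 : ∑ i, g i • C i = 0) (hgnn : ∀ i, 0 ≤ g i) : g = 0 := by
  by_contra hne
  have hyP := hy.1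
  set t : Finset (Fin n) := univ.filter (fun i => g i ≠ 0) with ht
  have htne : t.Nonempty := by
    obtain ⟨i, hi⟩ := Function.ne_iff.mp hne
    have hi' : g i ≠ 0 := by simpa using hi
    exact ⟨i, by simp [ht, hi']⟩
  have hypos : ∀ i, g i ≠ 0 → 0 < y i := by
    intro i hi
    rcases lt_or_eq_of_le (hyP.1 i) with h | h
    · exact h
    · exact absurd (hg1 i (not_mem_supp.mpr h.symm)) hi
  set τ : ℝ := t.inf' htne (fun i => y i / g i) with hτ
  have hτpos : 0 < τ := by
    rw [hτ, Finset.lt_inf'_iff]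
    intro i hit
    have hgi : g i ≠ 0 := by simpa [ht] using hit
    exact div_pos (hypos i hgi) (lt_of_le_of_ne (hgnn i) (Ne.symm hgi))
  have hbound : ∀ i, τ * g i ≤ y i := by
    intro i
    by_cases h : g i = 0
    · simpa [h] using hyP.1 i
    · have hit : i ∈ t := by simp [ht, h]
      have hle : τ ≤ y i / g i := Finset.inf'_le _ hit
      have hpos : 0 < g i := lt_of_le_of_ne (hgnn i) (Ne.symm h)
      calc τ * g i ≤ (y i / g i) * g i := mul_le_mul_of_nonneg_right hle hpos.le
        _ = y i := div_mul_cancel₀ _ hpos.ne'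
  apply hy.2
  refine ⟨fun i => y i - τ * g i, ⟨?_, ?_⟩, ?_, ?_⟩
  · intro i; have := hbound i; simp; linarith
  · have : ∀ i, (y i - τ * g i) • C i = (y i + (-τ) * g i) • C i := by
      intro i; ring_nf
    rw [Finset.sum_congr rfl fun i _ => this i, sum_add_mul_smul, hg2, hyP.2]
    simp
  · intro i
    have : 0 ≤ τ * g i := mul_nonneg hτpos.le (hgnn i)
    simp only
    linarith
  · intro heq
    obtain ⟨i₀, hi₀⟩ := htne
    have hgi₀ : g i₀ ≠ 0 := by simpa [ht] using hi₀
    have := congrFun heq i₀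
    have : τ * g i₀ = 0 := by linarith
    rcases mul_eq_zero.mp this with h | h
    · exact absurd h hτpos.ne'
    · exact absurd h hgi₀

/-- Part 2 core: induction on support size. -/
lemma part2core (C : Fin n → Fin m → ℝ) (b : Fin m → ℝ) :
    ∀ k : ℕ, ∀ y, (supp y).card ≤ k → IsMinimalPt C b y →
      y ∈ convexHull ℝ (Set.extremePoints ℝ (PolyP C b)) := by
  intro k
  induction k with
  | zero =>
    intro y hcard hy
    have hempty : supp y = ∅ := Finset.card_eq_zero.mp (Nat.le_zero.mp hcard)
    have hG : Good C (supp y) := by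
      intro g hg1 _
      funext i
      have : i ∉ supp y := by rw [hempty]; exact Finset.notMem_empty i
      simpa using hg1 i this
    exact subset_convexHull ℝ _ (extreme_of_good C b y hy.1 hG)
  | succ k ih =>
    intro y hcard hy
    by_cases hG : Good C (supp y)
    · exact subset_convexHull ℝ _ (extreme_of_good C b y hy.1 hG)
    · unfold Good at hG
      push_neg at hG
      obtain ⟨g, hg1, hg2, hg3⟩ := hG
      have hyP := hy.1
      have hypos : ∀ i, g i ≠ 0 → 0 < y i := by
        intro i hi
        rcases lt_or_eq_of_le (hyP.1 i) with h | h
        · exact h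
        · exact absurd (hg1 i (not_mem_supp.mpr h.symm)) hi
      set Pos : Finset (Fin n) := univ.filter (fun i => 0 < g i) with hPosd
      set Neg : Finset (Fin n) := univ.filter (fun i => g i < 0) with hNegd
      have hPos : Pos.Nonempty := by
        by_contra h
        rw [Finset.not_nonempty_iff_eq_empty] at h
        have hgle : ∀ i, g i ≤ 0 := by
          intro i
          by_contra hgt
          push_neg at hgt
          have : i ∈ Pos := by simp [hPosd, hgt]
          simp [h] at this
        have : -g = 0 := by
          apply no_nonneg_dir C b hy (g := -g)
          · intro i hi; simp [hg1 i hi]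
          · have : ∀ i, (-g) i • C i = -(g i • C i) := by intro i; simp [neg_smul]
            rw [Finset.sum_congr rfl fun i _ => this i, Finset.sum_neg_distrib, hg2, neg_zero]
          · intro i; simpa using hgle i
        exact hg3 (by simpa [neg_eq_zero] using this)
      have hNeg : Neg.Nonempty := by
        by_contra h
        rw [Finset.not_nonempty_iff_eq_empty] at h
        have hgge : ∀ i, 0 ≤ g i := by
          intro i
          by_contra hgt
          push_neg at hgt
          have : i ∈ Neg := by simp [hNegd, hgt]
          simp [h] at this
        exact hg3 (no_nonneg_dir C b hy hg1 hg2 hgge)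
      set tp : ℝ := Neg.inf' hNeg (fun i => y i / (-g i)) with htp
      set tm : ℝ := Pos.inf' hPos (fun i => y i / g i) with htm
      have htppos : 0 < tp := by
        rw [htp, Finset.lt_inf'_iff]
        intro i hi
        have hgi : g i < 0 := by simpa [hNegd] using hi
        exact div_pos (hypos i hgi.ne) (by linarith)
      have htmpos : 0 < tm := by
        rw [htm, Finset.lt_inf'_iff]
        intro i hi
        have hgi : 0 < g i := by simpa [hPosd] using hi
        exact div_pos (hypos i hgi.ne') hgi
      set u : Fin n → ℝ := fun i => y i + tp * g i with hud
      set v : Fin n → ℝ := fun i => y i - tm * g i with hvd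
      have huP : u ∈ PolyP C b := by
        constructor
        · intro i
          rcases le_or_gt 0 (g i) with h | h
          · have : 0 ≤ tp * g i := mul_nonneg htppos.le h
            have := hyP.1 i
            simp only [hud]; linarith
          · have hi : i ∈ Neg := by simp [hNegd, h]
            have hle : tp ≤ y i / (-g i) := Finset.inf'_le _ hi
            have : tp * (-g i) ≤ y i := by
              calc tp * (-g i) ≤ (y i / (-g i)) * (-g i) :=
                    mul_le_mul_of_nonneg_right hle (by linarith)
                _ = y i := div_mul_cancel₀ _ (by linarith)
            simp only [hud]; linarith
        · rw [show ∑ i, u i • C i = (∑ i, y i • C i) + tp • ∑ i, g i • C i from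
            sum_add_mul_smul C tp y g, hg2, hyP.2]
          simp
      have hvP : v ∈ PolyP C b := by
        constructor
        · intro i
          rcases le_or_gt (g i) 0 with h | h
          · have : tm * g i ≤ 0 := mul_nonpos_of_nonneg_of_nonpos htmpos.le h
            have := hyP.1 i
            simp only [hvd]; linarith
          · have hi : i ∈ Pos := by simp [hPosd, h]
            have hle : tm ≤ y i / g i := Finset.inf'_le _ hi
            have : tm * g i ≤ y i := by
              calc tm * g i ≤ (y i / g i) * g i := mul_le_mul_of_nonneg_right hle h.le
                _ = y i := div_mul_cancel₀ _ h.ne'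
            simp only [hvd]; linarith
        · have : ∀ i, v i • C i = (y i + (-tm) * g i) • C i := by
            intro i; simp only [hvd]; ring_nf
          rw [Finset.sum_congr rfl fun i _ => this i, sum_add_mul_smul, hg2, hyP.2]
          simp
      -- supports shrink
      have hsuppu : supp u ⊆ supp y := by
        intro i hi
        rw [mem_supp] at hi ⊢
        intro hyi
        apply hi
        have hgi : g i = 0 := hg1 i (not_mem_supp.mpr hyi)
        simp [hud, hyi, hgi]
      have hsuppv : supp v ⊆ supp y := by
        intro i hi
        rw [mem_supp] at hi ⊢
        intro hyi
        apply hi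
        have hgi : g i = 0 := hg1 i (not_mem_supp.mpr hyi)
        simp [hvd, hyi, hgi]
      obtain ⟨i₀, hi₀mem, hi₀eq⟩ := Finset.exists_mem_eq_inf' hNeg (fun i => y i / (-g i))
      have hgi₀ : g i₀ < 0 := by simpa [hNegd] using hi₀mem
      have hui₀ : u i₀ = 0 := by
        have h0 : -g i₀ ≠ 0 := by linarith
        simp only [hud]
        rw [← htp] at hi₀eq
        rw [hi₀eq]
        field_simp
        rw [div_self hgi₀.ne]; ring
      obtain ⟨i₁, hi₁mem, hi₁eq⟩ := Finset.exists_mem_eq_inf' hPos (fun i => y i / g i)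
      have hgi₁ : 0 < g i₁ := by simpa [hPosd] using hi₁mem
      have hvi₁ : v i₁ = 0 := by
        simp only [hvd]
        rw [← htm] at hi₁eq
        rw [hi₁eq]
        field_simp
        ring
      have hcardu : (supp u).card ≤ k := by
        have hss : supp u ⊂ supp y := by
          refine Finset.ssubset_iff_of_subset hsuppu |>.mpr ⟨i₀, ?_, ?_⟩
          · exact mem_supp.mpr (hypos i₀ hgi₀.ne).ne'
          · rw [not_mem_supp]; exact hui₀
        have := Finset.card_lt_card hss
        omega
      have hcardv : (supp v).card ≤ k := by
        have hss : supp v ⊂ supp y := by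
          refine Finset.ssubset_iff_of_subset hsuppv |>.mpr ⟨i₁, ?_, ?_⟩
          · exact mem_supp.mpr (hypos i₁ hgi₁.ne').ne'
          · rw [not_mem_supp]; exact hvi₁
        have := Finset.card_lt_card hss
        omega
      -- convex combination
      set S : ℝ := tp + tm with hS
      have hSpos : 0 < S := by rw [hS]; linarith
      set a : ℝ := tm / S with had
      set c : ℝ := tp / S with hcd
      have hapos : 0 < a := div_pos htmpos hSpos
      have hcpos : 0 < c := div_pos htppos hSpos
      have hac : a + c = 1 := by
        rw [had, hcd, ← add_div, hS, add_comm]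
        exact div_self hSpos.ne'
      have hdec : a • u + c • v = y := by
        funext i
        simp only [Pi.add_apply, Pi.smul_apply, smul_eq_mul, hud, hvd, had, hcd]
        field_simp
        ring
      have humin : IsMinimalPt C b u :=
        minimal_of_decomp C b hy huP hvP hapos hcpos.le hac hdec
      have hvmin : IsMinimalPt C b v := by
        refine minimal_of_decomp C b hy hvP huP hcpos hapos.le (by linarith) ?_
        rw [add_comm]; exact hdec
      have hu_hull := ih u hcardu humin
      have hv_hull := ih v hcardv hvmin
      have := (convex_convexHull ℝ (Set.extremePoints ℝ (PolyP C b)))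
        hu_hull hv_hull hapos.le hcpos.le hac
      rwa [hdec] at this

/-- The coefficient map as a linear map. -/
def Amap (C : Fin n → Fin m → ℝ) : (Fin n → ℝ) →ₗ[ℝ] (Fin m → ℝ) where
  toFun x := ∑ i, x i • C i
  map_add' x y := by
    show ∑ i, (x + y) i • C i = (∑ i, x i • C i) + ∑ i, y i • C i
    rw [← Finset.sum_add_distrib]
    exact Finset.sum_congr rfl fun i _ => by
      rw [Pi.add_apply, add_smul]
  map_smul' c x := by
    show ∑ i, (c • x) i • C i = c • ∑ i, x i • C i
    rw [Finset.smul_sum]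
    exact Finset.sum_congr rfl fun i _ => by
      rw [Pi.smul_apply, smul_eq_mul, mul_smul]

/-- The subspace of vectors supported on `s`. -/
def Vs (s : Finset (Fin n)) : Submodule ℝ (Fin n → ℝ) where
  carrier := {x | ∀ i ∉ s, x i = 0}
  add_mem' := fun hx hy i hi => by simp [hx i hi, hy i hi]
  zero_mem' := fun i _ => rfl
  smul_mem' := fun c x hx i hi => by simp [hx i hi]

/-- For each index set there is a bound constant (trivial if columns dependent). -/
lemma exists_bound (C : Fin n → Fin m → ℝ) (s : Finset (Fin n)) :
    ∃ M : ℝ, 0 ≤ M ∧ ∀ x : Fin n → ℝ, Good C s → (∀ i ∉ s, x i = 0) →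
      ∑ i, |x i| ≤ M * ∑ j, |(∑ i, x i • C i) j| := by
  by_cases hG : Good C s
  · set V := Vs (n := n) s with hV
    set φ : V →ₗ[ℝ] (Fin m → ℝ) := (Amap C).comp V.subtype with hφ
    have hinj : Function.Injective φ := by
      intro x y hxy
      have hmem : ((x : Fin n → ℝ) - y) ∈ V := V.sub_mem x.2 y.2
      have h0 : ∑ i, ((x : Fin n → ℝ) - y) i • C i = 0 := by
        simp only [Pi.sub_apply]
        rw [sum_sub_smul]
        have hx' := hxy
        simp only [hφ, LinearMap.comp_apply, Amap, LinearMap.coe_mk, AddHom.coe_mk,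
          Submodule.coe_subtype] at hx'
        rw [hx', sub_self]
      have := hG _ (fun i hi => hmem i hi) h0
      exact Subtype.ext (sub_eq_zero.mp this)
    set e := LinearEquiv.ofInjective φ hinj with he
    set L := LinearMap.toContinuousLinearMap e.symm.toLinearMap with hL
    refine ⟨(n : ℝ) * ‖L‖, by positivity, ?_⟩
    intro x _ hx
    set xv : V := ⟨x, hx⟩ with hxv
    have key : ‖xv‖ ≤ ‖L‖ * ‖(∑ i, x i • C i : Fin m → ℝ)‖ := by
      have h1 : xv = e.symm (e xv) := (e.symm_apply_apply xv).symm
      have h2 : ‖e.symm (e xv)‖ ≤ ‖L‖ * ‖e xv‖ := L.le_opNorm (e xv)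
      have h3 : ‖e xv‖ = ‖(∑ i, x i • C i : Fin m → ℝ)‖ := by
        have : ((e xv : Fin m → ℝ)) = φ xv := by
          rw [he]; rfl
        rw [show ‖e xv‖ = ‖(e xv : Fin m → ℝ)‖ from rfl, this]
        rfl
      rw [h1]
      calc ‖e.symm (e xv)‖ ≤ ‖L‖ * ‖e xv‖ := h2
        _ = ‖L‖ * ‖(∑ i, x i • C i : Fin m → ℝ)‖ := by rw [h3]
    have hxnorm : ∑ i, |x i| ≤ (n : ℝ) * ‖xv‖ := by
      have h1 : ∀ i, |x i| ≤ ‖xv‖ := by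
        intro i
        have : ‖x i‖ ≤ ‖x‖ := norm_le_pi_norm x i
        simpa [Real.norm_eq_abs] using this
      calc ∑ i, |x i| ≤ ∑ _i : Fin n, ‖xv‖ := Finset.sum_le_sum fun i _ => h1 i
        _ = (n : ℝ) * ‖xv‖ := by simp [mul_comm]
    have hbnorm : ‖(∑ i, x i • C i : Fin m → ℝ)‖ ≤ ∑ j, |(∑ i, x i • C i) j| := by
      rw [pi_norm_le_iff_of_nonneg (Finset.sum_nonneg fun j _ => abs_nonneg _)]
      intro j
      rw [Real.norm_eq_abs]
      exact Finset.single_le_sum (f := fun j => |(∑ i, x i • C i) j|)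
        (fun j _ => abs_nonneg _) (mem_univ j)
    calc ∑ i, |x i| ≤ (n : ℝ) * ‖xv‖ := hxnorm
      _ ≤ (n : ℝ) * (‖L‖ * ‖(∑ i, x i • C i : Fin m → ℝ)‖) := by
          apply mul_le_mul_of_nonneg_left key (by positivity)
      _ ≤ (n : ℝ) * (‖L‖ * ∑ j, |(∑ i, x i • C i) j|) := by
          apply mul_le_mul_of_nonneg_left _ (Nat.cast_nonneg n)
          exact mul_le_mul_of_nonneg_left hbnorm (ContinuousLinearMap.opNorm_nonneg L)
      _ = (n : ℝ) * ‖L‖ * ∑ j, |(∑ i, x i • C i) j| := by ring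
  · exact ⟨0, le_refl 0, fun x hG' _ => absurd hG' hG⟩

/-- Part 3. -/
lemma part3 (C : Fin n → Fin m → ℝ) :
    ∃ M : ℝ, ∀ b' : Fin m → ℝ, (PolyP C b').Nonempty →
      ∀ y, IsMinimalPt C b' y → ∑ i, |y i| ≤ M * ∑ j, |b' j| := by
  choose Ms hMs0 hMs using exists_bound C
  refine ⟨∑ s : Finset (Fin n), Ms s, ?_⟩
  intro b' _ y hy
  have hbnn : (0:ℝ) ≤ ∑ j, |b' j| := Finset.sum_nonneg fun j _ => abs_nonneg _
  set R : ℝ := (∑ s : Finset (Fin n), Ms s) * ∑ j, |b' j| with hR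
  have hEsub : Set.extremePoints ℝ (PolyP C b') ⊆ {x : Fin n → ℝ | ∑ i, x i ≤ R} := by
    intro e he
    have heP := he.1
    have hGe : Good C (supp e) := good_of_extreme C b' e he
    have h1 : ∑ i, |e i| ≤ Ms (supp e) * ∑ j, |b' j| := by
      have := hMs (supp e) e hGe (fun i hi => not_mem_supp.mp hi)
      rwa [heP.2] at this
    have h2 : Ms (supp e) ≤ ∑ s : Finset (Fin n), Ms s :=
      Finset.single_le_sum (fun s _ => hMs0 s) (mem_univ _)
    have h3 : ∑ i, e i ≤ ∑ i, |e i| := Finset.sum_le_sum fun i _ => le_abs_self _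
    calc ∑ i, e i ≤ ∑ i, |e i| := h3
      _ ≤ Ms (supp e) * ∑ j, |b' j| := h1
      _ ≤ R := mul_le_mul_of_nonneg_right h2 hbnn
  have hconv : Convex ℝ {x : Fin n → ℝ | ∑ i, x i ≤ R} := by
    intro x hx z hz a c ha hc hac
    simp only [Set.mem_setOf_eq] at hx hz ⊢
    have hsum : ∑ i, (a • x + c • z) i = a * ∑ i, x i + c * ∑ i, z i := by
      simp [Finset.mul_sum, Finset.sum_add_distrib]
    rw [hsum]
    calc a * ∑ i, x i + c * ∑ i, z i ≤ a * R + c * R :=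
          add_le_add (mul_le_mul_of_nonneg_left hx ha) (mul_le_mul_of_nonneg_left hz hc)
      _ = R := by rw [← add_mul, hac, one_mul]
  have hyhull := part2core C b' (supp y).card y le_rfl hy
  have hfin : ∑ i, y i ≤ R := convexHull_min hEsub hconv hyhull
  have habs : ∑ i, |y i| = ∑ i, y i :=
    Finset.sum_congr rfl fun i _ => abs_of_nonneg (hy.1.1 i)
  rw [habs]
  exact hfin

end Stmt18Aux

/-- If `P ≠ ∅` then: (1) below every `x ∈ P` there is a minimal point of `P`;
(2) every minimal point of `P` is a convex combination of extreme points of `P`;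
(3) there is `M`, depending only on `C`, such that for every `b'` with nonempty
polyhedron, every minimal point `y` satisfies `‖y‖₁ ≤ M ‖b'‖₁`. -/
theorem stmt18 (m n : ℕ) (hm : 1 ≤ m) (hmn : m ≤ n)
    (C : Fin n → Fin m → ℝ) (b : Fin m → ℝ) (hP : (PolyP C b).Nonempty) :
    (∀ x ∈ PolyP C b, ∃ y, IsMinimalPt C b y ∧ y ≤ x) ∧
    (∀ y, IsMinimalPt C b y → y ∈ convexHull ℝ (Set.extremePoints ℝ (PolyP C b))) ∧
    (∃ M : ℝ, ∀ b' : Fin m → ℝ, (PolyP C b').Nonempty →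
      ∀ y, IsMinimalPt C b' y → ∑ i, |y i| ≤ M * ∑ j, |b' j|) := by
  refine ⟨Stmt18Aux.part1 C b, ?_, Stmt18Aux.part3 C⟩
  intro y hy
  exact Stmt18Aux.part2core C b (Stmt18Aux.supp y).card y le_rfl hy
end
end

section
/- Let L : ℝ^n → ℝ^n be a linear map and φ : ℝ^n → ℝ a linear form. There exists a constant M, depending only on L and φ, such that for all b ∈ ℝ^n and c ∈ ℝ for which P = {x ∈ ℝ^n : x_i ≥ 0 for all i, L(x) = b, φ(x) ≥ c} is nonempty, and for every x ∈ P, there exists y ∈ P with y ≤ x coordinatewise and ‖y‖ ≤ M(‖b‖ + |c|). -/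
noncomputable section

/-- The polyhedron `P = {x ∈ ℝ₊^n : L(x) = b, φ(x) ≥ c}`. -/
def PolyLφ {n : ℕ} (L : (Fin n → ℝ) →ₗ[ℝ] (Fin n → ℝ)) (φ : (Fin n → ℝ) →ₗ[ℝ] ℝ)
    (b : Fin n → ℝ) (c : ℝ) : Set (Fin n → ℝ) :=
  {x | (∀ i, 0 ≤ x i) ∧ L x = b ∧ c ≤ φ x}

namespace Stmt19Aux

open Finset Module

variable {n : ℕ} (L : (Fin n → ℝ) →ₗ[ℝ] (Fin n → ℝ)) (φ : (Fin n → ℝ) →ₗ[ℝ] ℝ)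

/-- Directions preserving the tight constraints of pattern `(Z, t)`. -/
def Kp (Z : Set (Fin n)) (t : Prop) : Submodule ℝ (Fin n → ℝ) where
  carrier := {d | (∀ i ∈ Z, d i = 0) ∧ L d = 0 ∧ (t → φ d = 0)}
  add_mem' := by
    rintro a b ⟨ha1, ha2, ha3⟩ ⟨hb1, hb2, hb3⟩
    refine ⟨fun i hi => by simp [ha1 i hi, hb1 i hi], by simp [ha2, hb2],
      fun ht => by simp [ha3 ht, hb3 ht]⟩
  zero_mem' := ⟨fun i _ => rfl, map_zero _, fun _ => map_zero _⟩
  smul_mem' := by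
    rintro r a ⟨h1, h2, h3⟩
    refine ⟨fun i hi => by simp [h1 i hi], by simp [h2], fun ht => by simp [h3 ht]⟩

lemma mem_Kp {Z : Set (Fin n)} {t : Prop} {d : Fin n → ℝ} :
    d ∈ Kp L φ Z t ↔ (∀ i ∈ Z, d i = 0) ∧ L d = 0 ∧ (t → φ d = 0) := Iff.rfl

/-- Directions preserving the constraints tight at `x` (w.r.t. right-hand side `c`). -/
def Wx (c : ℝ) (x : Fin n → ℝ) : Submodule ℝ (Fin n → ℝ) :=
  Kp L φ {i | x i = 0} (φ x = c)

lemma mem_Wx {c : ℝ} {x d : Fin n → ℝ} :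
    d ∈ Wx L φ c x ↔ (∀ i, x i = 0 → d i = 0) ∧ L d = 0 ∧ (φ x = c → φ d = 0) := Iff.rfl

/-- Basic (vertex-type) bound for one pattern. -/
lemma basic (Z : Set (Fin n)) (t : Prop) (h : Kp L φ Z t = ⊥) :
    ∃ C : ℝ, 0 ≤ C ∧ ∀ (x : Fin n → ℝ) (c : ℝ), (∀ i ∈ Z, x i = 0) → (t → φ x = c) →
      ∑ i, |x i| ≤ C * (∑ i, |L x i| + |c|) := by
  classical
  set φ' : (Fin n → ℝ) →ₗ[ℝ] ℝ := if t then φ else 0 with hφ'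
  set pz : (Fin n → ℝ) →ₗ[ℝ] (Fin n → ℝ) :=
    LinearMap.pi (fun i => if i ∈ Z then LinearMap.proj i else 0) with hpz
  have hpz_apply : ∀ (z : Fin n → ℝ) i, pz z i = if i ∈ Z then z i else 0 := by
    intro z i
    by_cases hi : i ∈ Z <;> simp [hpz, LinearMap.pi_apply, hi]
  set G : (Fin n → ℝ) →ₗ[ℝ] (Fin n → ℝ) × (Fin n → ℝ) × ℝ := pz.prod (L.prod φ') with hG
  have hinj : Function.Injective G := by
    rw [← LinearMap.ker_eq_bot]
    rw [eq_bot_iff]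
    intro z hz
    simp only [LinearMap.mem_ker, hG, LinearMap.prod_apply, Function.prod, Prod.mk_eq_zero] at hz
    obtain ⟨hz1, hz2, hz3⟩ := hz
    have hzK : z ∈ Kp L φ Z t := by
      refine ⟨fun i hi => ?_, hz2, fun ht => ?_⟩
      · have := congrFun hz1 i
        rwa [hpz_apply, if_pos hi] at this
      · rwa [hφ', if_pos ht] at hz3
    rw [h] at hzK
    simpa using hzK
  let e : (Fin n → ℝ) ≃ₗ[ℝ] LinearMap.range G := LinearEquiv.ofInjective G hinj
  let e' : (Fin n → ℝ) ≃L[ℝ] LinearMap.range G := e.toContinuousLinearEquiv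
  set C : ℝ := ‖(e'.symm : LinearMap.range G →L[ℝ] (Fin n → ℝ))‖ with hC
  have key : ∀ z : Fin n → ℝ, ‖z‖ ≤ C * ‖G z‖ := by
    intro z
    have h1 : e'.symm (e' z) = z := e'.symm_apply_apply z
    have h2 : (e' z : (Fin n → ℝ) × (Fin n → ℝ) × ℝ) = G z := rfl
    calc ‖z‖ = ‖e'.symm (e' z)‖ := by rw [h1]
      _ ≤ C * ‖e' z‖ := (e'.symm : LinearMap.range G →L[ℝ] (Fin n → ℝ)).le_opNorm _
      _ = C * ‖G z‖ := by rw [← h2]; rfl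
  refine ⟨(n : ℝ) * C, by positivity, ?_⟩
  intro x c hxZ hxt
  set S : ℝ := ∑ i, |L x i| + |c| with hS
  have hS0 : 0 ≤ S := by positivity
  have hGx : ‖G x‖ ≤ S := by
    have hpzx : pz x = 0 := by
      funext i
      rw [hpz_apply]
      by_cases hi : i ∈ Z
      · simp [hi, hxZ i hi]
      · simp [hi]
    have hLx : ‖L x‖ ≤ S := by
      rw [pi_norm_le_iff_of_nonneg hS0]
      intro i
      rw [Real.norm_eq_abs]
      have h1 : |L x i| ≤ ∑ j, |L x j| :=
        Finset.single_le_sum (f := fun j => |L x j|) (fun j _ => abs_nonneg _) (mem_univ i)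
      have h2 : (0:ℝ) ≤ |c| := abs_nonneg _
      linarith
    have hφx : ‖φ' x‖ ≤ S := by
      by_cases ht : t
      · rw [hφ', if_pos ht, Real.norm_eq_abs, hxt ht]
        have : (0:ℝ) ≤ ∑ j, |L x j| := by positivity
        linarith
      · rw [hφ', if_neg ht]
        simpa using hS0
    calc ‖G x‖ = max ‖pz x‖ (max ‖L x‖ ‖φ' x‖) := by
          rw [hG]; rfl
      _ ≤ S := by
          rw [hpzx]
          simp only [norm_zero]
          exact max_le hS0 (max_le hLx hφx)
  have hsum : ∑ i, |x i| ≤ (n : ℝ) * ‖x‖ := by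
    calc ∑ i, |x i| ≤ ∑ _i : Fin n, ‖x‖ :=
          Finset.sum_le_sum (fun i _ => by rw [← Real.norm_eq_abs]; exact norm_le_pi_norm x i)
      _ = (n : ℝ) * ‖x‖ := by simp [mul_comm]
  calc ∑ i, |x i| ≤ (n : ℝ) * ‖x‖ := hsum
    _ ≤ (n : ℝ) * (C * ‖G x‖) := by
        apply mul_le_mul_of_nonneg_left (key x) (by positivity)
    _ ≤ (n : ℝ) * (C * S) := by
        have hC0 : 0 ≤ C := by rw [hC]; exact ContinuousLinearMap.opNorm_nonneg _
        apply mul_le_mul_of_nonneg_left (mul_le_mul_of_nonneg_left hGx hC0) (by positivity)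
    _ = (n : ℝ) * C * S := by ring

/-- A uniform constant over all patterns. -/
lemma exists_M : ∃ M : ℝ, 0 ≤ M ∧ ∀ (x : Fin n → ℝ) (c : ℝ), Wx L φ c x = ⊥ →
    ∑ i, |x i| ≤ M * (∑ i, |L x i| + |c|) := by
  classical
  have H : ∀ p : Finset (Fin n) × Bool, ∃ C : ℝ, 0 ≤ C ∧
      (Kp L φ ↑p.1 (p.2 = true) = ⊥ →
        ∀ (x : Fin n → ℝ) (c : ℝ), (∀ i ∈ (p.1 : Set (Fin n)), x i = 0) →
          (p.2 = true → φ x = c) → ∑ i, |x i| ≤ C * (∑ i, |L x i| + |c|)) := by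
    intro p
    by_cases h : Kp L φ ↑p.1 (p.2 = true) = ⊥
    · obtain ⟨C, h0, hC⟩ := basic L φ _ _ h
      exact ⟨C, h0, fun _ => hC⟩
    · exact ⟨0, le_refl _, fun h' => absurd h' h⟩
  choose C hC0 hCspec using H
  refine ⟨∑ p : Finset (Fin n) × Bool, C p, Finset.sum_nonneg fun p _ => hC0 p, ?_⟩
  intro x c hW
  set p : Finset (Fin n) × Bool :=
    (Finset.univ.filter (fun i => x i = 0), if φ x = c then true else false) with hp
  have hset : (↑p.1 : Set (Fin n)) = {i | x i = 0} := by
    ext i; simp [hp]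
  have hiff : (p.2 = true) ↔ (φ x = c) := by
    by_cases h : φ x = c <;> simp [hp, h]
  have hKp : Kp L φ ↑p.1 (p.2 = true) = Wx L φ c x := by
    rw [Wx, hset, propext hiff]
  have hb := hCspec p (hKp ▸ hW) x c
    (by rw [hset]; exact fun i hi => hi) (fun h => hiff.mp h)
  have hS0 : 0 ≤ ∑ i, |L x i| + |c| := by positivity
  calc ∑ i, |x i| ≤ C p * (∑ i, |L x i| + |c|) := hb
    _ ≤ (∑ q : Finset (Fin n) × Bool, C q) * (∑ i, |L x i| + |c|) :=
        mul_le_mul_of_nonneg_right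
          (Finset.single_le_sum (fun q _ => hC0 q) (mem_univ p)) hS0

/-- Ratio-test move: from `x`, move along a feasible direction `e` that is not a recession
direction, until a new constraint becomes tight. -/
lemma move (c : ℝ) (x : Fin n → ℝ) (hx0 : ∀ i, 0 ≤ x i) (hxc : c ≤ φ x)
    (e : Fin n → ℝ) (he : e ∈ Wx L φ c x) (hrec : ¬ ((∀ i, 0 ≤ e i) ∧ 0 ≤ φ e)) :
    ∃ T : ℝ, 0 < T ∧ (∀ i, 0 ≤ (x + T • e) i) ∧ c ≤ φ (x + T • e) ∧
      Wx L φ c (x + T • e) < Wx L φ c x := by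
  classical
  obtain ⟨heZ, heL, heφ⟩ := (mem_Wx L φ).mp he
  set bad : Finset (Option (Fin n)) :=
    Finset.univ.filter (fun o => o.elim (φ e < 0) (fun i => e i < 0)) with hbad
  have hmem : ∀ o, o ∈ bad ↔ o.elim (φ e < 0) (fun i => e i < 0) := by
    intro o; simp [hbad]
  have hne : bad.Nonempty := by
    rcases not_and_or.mp hrec with h | h
    · push_neg at h
      obtain ⟨i, hi⟩ := h
      exact ⟨some i, (hmem (some i)).mpr (by simpa using hi)⟩
    · exact ⟨none, (hmem none).mpr (by simpa using not_le.mp h)⟩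
  set val : Option (Fin n) → ℝ :=
    fun o => o.elim ((φ x - c) / (-φ e)) (fun i => x i / (-e i)) with hval
  set T : ℝ := bad.inf' hne val with hT
  have hTpos : 0 < T := by
    rw [hT, Finset.lt_inf'_iff]
    intro o ho
    rw [hmem] at ho
    cases o with
    | none =>
      simp only [Option.elim] at ho ⊢
      have hne' : φ x ≠ c := fun h => absurd (heφ h) (ne_of_lt ho)
      have : c < φ x := lt_of_le_of_ne hxc (Ne.symm hne')
      exact div_pos (by linarith) (by linarith)
    | some i =>
      simp only [Option.elim] at ho ⊢
      have hxi : x i ≠ 0 := fun h => absurd (heZ i h) (ne_of_lt ho)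
      have : 0 < x i := lt_of_le_of_ne (hx0 i) (Ne.symm hxi)
      exact div_pos this (by linarith)
  have hTle : ∀ o ∈ bad, T ≤ val o := fun o ho => Finset.inf'_le val ho
  have hcoord : ∀ i, 0 ≤ (x + T • e) i := by
    intro i
    simp only [Pi.add_apply, Pi.smul_apply, smul_eq_mul]
    by_cases hei : 0 ≤ e i
    · have := mul_nonneg hTpos.le hei
      linarith [hx0 i]
    · have hei' : e i < 0 := not_le.mp hei
      have hio : T ≤ x i / (-e i) := hTle (some i) ((hmem _).mpr (by simpa using hei'))
      rw [le_div_iff₀ (by linarith : (0:ℝ) < -e i)] at hio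
      linarith
  have hphi : c ≤ φ (x + T • e) := by
    rw [map_add, map_smul, smul_eq_mul]
    by_cases hφe : 0 ≤ φ e
    · have := mul_nonneg hTpos.le hφe
      linarith
    · have hφe' : φ e < 0 := not_le.mp hφe
      have hio : T ≤ (φ x - c) / (-φ e) := hTle none ((hmem _).mpr (by simpa using hφe'))
      rw [le_div_iff₀ (by linarith : (0:ℝ) < -φ e)] at hio
      linarith
  refine ⟨T, hTpos, hcoord, hphi, ?_⟩
  have hle : Wx L φ c (x + T • e) ≤ Wx L φ c x := by
    intro g hg
    obtain ⟨hg1, hg2, hg3⟩ := (mem_Wx L φ).mp hg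
    refine (mem_Wx L φ).mpr ⟨fun i hi => ?_, hg2, fun hc => ?_⟩
    · apply hg1
      simp [Pi.add_apply, hi, heZ i hi]
    · apply hg3
      rw [map_add, map_smul, smul_eq_mul, heφ hc, hc]; ring
  have hnein : e ∉ Wx L φ c (x + T • e) := by
    obtain ⟨o, ho, hTo⟩ := Finset.exists_mem_eq_inf' hne val
    rw [hmem] at ho
    cases o with
    | none =>
      simp only [Option.elim] at ho
      have hTv : T = (φ x - c) / (-φ e) := by rw [hT, hTo]; rfl
      intro hmem'
      obtain ⟨_, _, h3⟩ := (mem_Wx L φ).mp hmem'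
      have hφe0 : φ e ≠ 0 := ne_of_lt ho
      have h5 : (φ x - c) / -φ e * -φ e = φ x - c :=
        div_mul_cancel₀ _ (neg_ne_zero.mpr hφe0)
      rw [mul_neg] at h5
      have : φ (x + T • e) = c := by
        rw [map_add, map_smul, smul_eq_mul, hTv]
        linarith
      exact absurd (h3 this) hφe0
    | some i =>
      simp only [Option.elim] at ho
      have hTv : T = x i / (-e i) := by rw [hT, hTo]; rfl
      intro hmem'
      obtain ⟨h1, _, _⟩ := (mem_Wx L φ).mp hmem'
      have hei0 : e i ≠ 0 := ne_of_lt ho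
      have h5 : x i / -e i * -e i = x i :=
        div_mul_cancel₀ _ (neg_ne_zero.mpr hei0)
      rw [mul_neg] at h5
      have hzero : (x + T • e) i = 0 := by
        simp only [Pi.add_apply, Pi.smul_apply, smul_eq_mul]
        rw [hTv]
        linarith
      exact absurd (h1 i hzero) hei0
  exact lt_of_le_of_ne hle (fun h => hnein (h ▸ he))

lemma main (M : ℝ) (hM0 : 0 ≤ M)
    (hM : ∀ (x : Fin n → ℝ) (c : ℝ), Wx L φ c x = ⊥ →
      ∑ i, |x i| ≤ M * (∑ i, |L x i| + |c|)) :
    ∀ (k : ℕ) (x b : Fin n → ℝ) (c : ℝ), x ∈ PolyLφ L φ b c →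
      finrank ℝ (Wx L φ c x) ≤ k →
      ∃ v ∈ PolyLφ L φ b c, v ≤ x ∧ ∑ i, |v i| ≤ M * (∑ i, |b i| + |c|) := by
  intro k
  induction k with
  | zero =>
    intro x b c hx hr
    have hbot : Wx L φ c x = ⊥ := Submodule.finrank_eq_zero.mp (Nat.le_zero.mp hr)
    refine ⟨x, hx, le_refl x, ?_⟩
    have := hM x c hbot
    rwa [hx.2.1] at this
  | succ k ih =>
    intro x b c hx hr
    by_cases hW : Wx L φ c x = ⊥
    · refine ⟨x, hx, le_refl x, ?_⟩
      have := hM x c hW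
      rwa [hx.2.1] at this
    · obtain ⟨d, hd, hd0⟩ := (Submodule.ne_bot_iff _).mp hW
      have hdL : L d = 0 := ((mem_Wx L φ).mp hd).2.1
      have step : ∀ e : Fin n → ℝ, e ∈ Wx L φ c x → ¬ ((∀ i, 0 ≤ e i) ∧ 0 ≤ φ e) →
          ∃ T : ℝ, 0 < T ∧ (x + T • e) ∈ PolyLφ L φ b c ∧
            finrank ℝ (Wx L φ c (x + T • e)) ≤ k := by
        intro e hee hrec
        obtain ⟨T, hTpos, h0, hc, hlt⟩ := move L φ c x hx.1 hx.2.2 e hee hrec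
        have heL : L e = 0 := ((mem_Wx L φ).mp hee).2.1
        refine ⟨T, hTpos, ⟨h0, ?_, hc⟩, ?_⟩
        · rw [map_add, map_smul, heL, smul_zero, add_zero, hx.2.1]
        · have := Submodule.finrank_lt_finrank_of_lt hlt
          omega
      by_cases h1 : (∀ i, 0 ≤ d i) ∧ 0 ≤ φ d
      · by_cases h2 : (∀ i, 0 ≤ (-d : Fin n → ℝ) i) ∧ 0 ≤ φ (-d)
        · exfalso
          apply hd0
          funext i
          have ha := h1.1 i
          have hb' := h2.1 i
          simp only [Pi.neg_apply] at hb'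
          have : d i = 0 := le_antisymm (by linarith) ha
          simpa using this
        · obtain ⟨T, hTpos, hxP, hrk⟩ := step (-d) (neg_mem hd) h2
          obtain ⟨v, hv, hvle, hvb⟩ := ih (x + T • (-d)) b c hxP hrk
          refine ⟨v, hv, le_trans hvle ?_, hvb⟩
          intro i
          simp only [Pi.add_apply, Pi.smul_apply, Pi.neg_apply, smul_eq_mul]
          have := mul_nonneg hTpos.le (h1.1 i)
          linarith
      · obtain ⟨T₁, hT₁, hx₁P, hrk₁⟩ := step d hd h1
        by_cases h2 : (∀ i, 0 ≤ (-d : Fin n → ℝ) i) ∧ 0 ≤ φ (-d)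
        · obtain ⟨v, hv, hvle, hvb⟩ := ih (x + T₁ • d) b c hx₁P hrk₁
          refine ⟨v, hv, le_trans hvle ?_, hvb⟩
          intro i
          simp only [Pi.add_apply, Pi.smul_apply, smul_eq_mul]
          have hb' := h2.1 i
          simp only [Pi.neg_apply] at hb'
          have := mul_nonneg hT₁.le (by linarith : 0 ≤ -d i)
          nlinarith
        · obtain ⟨T₂, hT₂, hx₂P, hrk₂⟩ := step (-d) (neg_mem hd) h2
          obtain ⟨v₁, hv₁, hv₁le, hv₁b⟩ := ih (x + T₁ • d) b c hx₁P hrk₁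
          obtain ⟨v₂, hv₂, hv₂le, hv₂b⟩ := ih (x + T₂ • (-d)) b c hx₂P hrk₂
          set s : ℝ := T₁ + T₂ with hs
          have hs0 : 0 < s := by positivity
          set l : ℝ := T₂ / s with hl
          set m : ℝ := T₁ / s with hm
          have hl0 : 0 ≤ l := by positivity
          have hm0 : 0 ≤ m := by positivity
          have hlm : l + m = 1 := by
            rw [hl, hm, ← add_div, hs]
            field_simp
            ring
          set v : Fin n → ℝ := l • v₁ + m • v₂ with hv
          have hcomb : ∀ i, l * (x + T₁ • d) i + m * (x + T₂ • (-d)) i = x i := by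
            intro i
            simp only [Pi.add_apply, Pi.smul_apply, Pi.neg_apply, smul_eq_mul]
            rw [hl, hm]
            field_simp
            ring
          have hv0 : ∀ i, 0 ≤ v i := by
            intro i
            simp only [hv, Pi.add_apply, Pi.smul_apply, smul_eq_mul]
            exact add_nonneg (mul_nonneg hl0 (hv₁.1 i)) (mul_nonneg hm0 (hv₂.1 i))
          have hvP : v ∈ PolyLφ L φ b c := by
            refine ⟨hv0, ?_, ?_⟩
            · rw [hv, map_add, map_smul, map_smul, hv₁.2.1, hv₂.2.1, ← add_smul, hlm, one_smul]
            · have e1 : φ v = l * φ v₁ + m * φ v₂ := by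
                rw [hv, map_add, map_smul, map_smul, smul_eq_mul, smul_eq_mul]
              have b1 : l * c ≤ l * φ v₁ := mul_le_mul_of_nonneg_left hv₁.2.2 hl0
              have b2 : m * c ≤ m * φ v₂ := mul_le_mul_of_nonneg_left hv₂.2.2 hm0
              have : c = l * c + m * c := by rw [← add_mul, hlm, one_mul]
              rw [e1]; linarith
          have hvle : v ≤ x := by
            intro i
            simp only [hv, Pi.add_apply, Pi.smul_apply, smul_eq_mul]
            have b1 : l * v₁ i ≤ l * (x + T₁ • d) i :=
              mul_le_mul_of_nonneg_left (hv₁le i) hl0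
            have b2 : m * v₂ i ≤ m * (x + T₂ • (-d)) i :=
              mul_le_mul_of_nonneg_left (hv₂le i) hm0
            have := hcomb i
            linarith
          refine ⟨v, hvP, hvle, ?_⟩
          have habs : ∀ (w : Fin n → ℝ), (∀ i, 0 ≤ w i) → ∑ i, |w i| = ∑ i, w i :=
            fun w hw => Finset.sum_congr rfl (fun i _ => abs_of_nonneg (hw i))
          have e2 : ∑ i, v i = l * (∑ i, v₁ i) + m * (∑ i, v₂ i) := by
            rw [hv]
            simp only [Pi.add_apply, Pi.smul_apply, smul_eq_mul]
            rw [Finset.sum_add_distrib, Finset.mul_sum, Finset.mul_sum]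
          have hs1 : ∑ i, v₁ i ≤ M * (∑ i, |b i| + |c|) := by
            rw [← habs v₁ hv₁.1]; exact hv₁b
          have hs2 : ∑ i, v₂ i ≤ M * (∑ i, |b i| + |c|) := by
            rw [← habs v₂ hv₂.1]; exact hv₂b
          rw [habs v hv0, e2]
          have b1 : l * (∑ i, v₁ i) ≤ l * (M * (∑ i, |b i| + |c|)) :=
            mul_le_mul_of_nonneg_left hs1 hl0
          have b2 : m * (∑ i, v₂ i) ≤ m * (M * (∑ i, |b i| + |c|)) :=
            mul_le_mul_of_nonneg_left hs2 hm0
          have : l * (M * (∑ i, |b i| + |c|)) + m * (M * (∑ i, |b i| + |c|))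
              = M * (∑ i, |b i| + |c|) := by
            rw [← add_mul, hlm, one_mul]
          linarith

end Stmt19Aux

/-- There is a constant `M`, depending only on `L` and `φ`, such that for all `b, c` with
`P = {x ≥ 0 : L(x) = b, φ(x) ≥ c}` nonempty and every `x ∈ P`, there is `y ∈ P` with
`y ≤ x` coordinatewise and `‖y‖₁ ≤ M(‖b‖₁ + |c|)`. -/
theorem stmt19 (n : ℕ) (hn : 1 ≤ n)
    (L : (Fin n → ℝ) →ₗ[ℝ] (Fin n → ℝ)) (φ : (Fin n → ℝ) →ₗ[ℝ] ℝ) :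
    ∃ M : ℝ, ∀ (b : Fin n → ℝ) (c : ℝ), (PolyLφ L φ b c).Nonempty →
      ∀ x ∈ PolyLφ L φ b c, ∃ y ∈ PolyLφ L φ b c, y ≤ x ∧
        ∑ i, |y i| ≤ M * (∑ i, |b i| + |c|) := by
  obtain ⟨M, hM0, hM⟩ := Stmt19Aux.exists_M L φ
  refine ⟨M, fun b c _ x hx => ?_⟩
  exact Stmt19Aux.main L φ M hM0 hM (Module.finrank ℝ (Fin n → ℝ)) x b c hx
    (Submodule.finrank_le _)
end
end
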